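/- For a ≤ 1/2, the marginal Dirichlet-Laplace density f_d(β) = (1/(2^{(1+a)/2} Γ(a))) |β|^{(a-1)/2} K_{1-a}(√(2|β|)) satisfies the lower bound f_d(β) ≥ √π · a · |β|^{(2a-3)/4} · exp(-√(2|β|)) / 2^{(2a+5)/4} for all β ≠ 0. -/

import Mathlib

/-- The modified Bessel function of the second kind, via the standard integral
representation. -/
noncomputable def besselK (ν x : ℝ) : ℝ :=
  (1 / 2) * (x / 2) ^ ν * ∫ t in Set.Ioi (0 : ℝ), t ^ (-ν - 1) * Real.exp (-t - x ^ 2 / (4 * t))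

/-- The marginal Dirichlet-Laplace density. -/
noncomputable def dlDensity (a β : ℝ) : ℝ :=
  (1 / ((2 : ℝ) ^ ((1 + a) / 2) * Real.Gamma a)) * |β| ^ ((a - 1) / 2) *
    besselK (1 - a) (Real.sqrt (2 * |β|))

open Real MeasureTheory Set

set_option maxHeartbeats 1000000


theorem rpow_mono_aux (u : ℝ) (hu : 0 < u) (ν : ℝ) (hν : 1/2 ≤ ν) :
    u^(1/2:ℝ) + u^(-(1/2):ℝ) ≤ u^ν + u^(-ν) := by
  have h1 : u^ν * u^(-(ν+1/2)) = u^(-(1/2):ℝ) := by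
    rw [← Real.rpow_add hu]; ring_nf
  have h2 : u^(1/2:ℝ) * u^(-(ν+1/2)) = u^(-ν) := by
    rw [← Real.rpow_add hu]; ring_nf
  have key : u^ν + u^(-ν) - (u^(1/2:ℝ) + u^(-(1/2):ℝ))
      = (u^ν - u^(1/2:ℝ)) * (1 - u^(-(ν+1/2))) := by
    linear_combination h1 - h2
  rcases le_total 1 u with hu1 | hu1
  · have ha : u^(1/2:ℝ) ≤ u^ν := Real.rpow_le_rpow_of_exponent_le hu1 hν
    have hb : u^(-(ν+1/2)) ≤ 1 :=
      Real.rpow_le_one_of_one_le_of_nonpos hu1 (by linarith)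
    nlinarith
  · have ha : u^ν ≤ u^(1/2:ℝ) := Real.rpow_le_rpow_of_exponent_ge hu hu1 hν
    have hb : 1 ≤ u^(-(ν+1/2)) :=
      Real.one_le_rpow_of_pos_of_le_one_of_nonpos hu hu1 (by linarith)
    nlinarith

theorem rpow_mono_aux2 (p q ν : ℝ) (hp : 0 < p) (hq : 0 < q) (hν : 1/2 ≤ ν) :
    p^(1/2:ℝ) * q^(-(3/2):ℝ) + p^(-(1/2):ℝ) * q^(-(1/2):ℝ)
      ≤ p^ν * q^(-ν-1) + p^(-ν) * q^(ν-1) := by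
  have hu := rpow_mono_aux (p/q) (div_pos hp hq) ν hν
  have key : ∀ μ : ℝ, (p/q)^μ * q⁻¹ = p^μ * q^(-μ-1) := by
    intro μ
    rw [Real.div_rpow hp.le hq.le, div_eq_mul_inv, ← Real.rpow_neg hq.le, mul_assoc,
      ← Real.rpow_neg_one q, ← Real.rpow_add hq]
    ring_nf
  have hmul := mul_le_mul_of_nonneg_right hu (inv_pos.mpr hq).le
  rw [add_mul, add_mul, key (1/2), key (-(1/2)), key ν, key (-ν)] at hmul
  rw [show -(1/2:ℝ)-1 = -(3/2:ℝ) by norm_num, show -(-(1/2:ℝ))-1 = -(1/2:ℝ) by norm_num,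
    show -(-ν)-1 = ν-1 by ring] at hmul
  exact hmul


theorem my_integrable (x : ℝ) (hx : 0 < x) (r : ℝ) (hr1 : -2 ≤ r) (hr2 : r ≤ 0) :
    IntegrableOn (fun t : ℝ => t ^ r * Real.exp (-t - x^2/(4*t))) (Set.Ioi 0) := by
  have hcont : ContinuousOn (fun t : ℝ => t ^ r * Real.exp (-t - x^2/(4*t))) (Set.Ioi 0) := by
    apply ContinuousOn.mul
    · exact fun t ht => (Real.continuousAt_rpow_const t r (Or.inl (ne_of_gt ht))).continuousWithinAt
    · apply Real.continuous_exp.comp_continuousOn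
      apply ContinuousOn.sub (continuous_neg.continuousOn)
      apply ContinuousOn.div continuousOn_const (by fun_prop)
      intro t ht
      have ht0 : (0:ℝ) < t := ht
      positivity
  have hIoc : IntegrableOn (fun t : ℝ => t ^ r * Real.exp (-t - x^2/(4*t))) (Set.Ioc 0 1) := by
    apply Integrable.mono' (g := fun _ : ℝ => 64 / x^4)
      (integrableOn_const measure_Ioc_lt_top.ne)
    · exact (hcont.mono Ioc_subset_Ioi_self).aestronglyMeasurable measurableSet_Ioc
    · filter_upwards [ae_restrict_mem measurableSet_Ioc] with t ht
      obtain ⟨ht0, ht1⟩ := ht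
      have h1 : t ^ r ≤ t ^ (-2:ℝ) := Real.rpow_le_rpow_of_exponent_ge ht0 ht1 hr1
      have h2 : Real.exp (-t - x^2/(4*t)) ≤ Real.exp (-(x^2/(4*t))) := by
        apply Real.exp_le_exp.mpr; nlinarith
      have h3 : Real.exp (-(x^2/(4*t))) ≤ 64 * t^2 / x^4 := by
        rw [Real.exp_neg, inv_le_comm₀ (Real.exp_pos _) (by positivity)]
        calc (64 * t^2 / x^4)⁻¹ = x^4 / (64 * t^2) := by rw [inv_div]
          _ ≤ (1 + x^2/(8*t))^2 := by
              rw [div_le_iff₀ (by positivity)]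
              have e1 : (1 + x^2/(8*t))^2 * (64*t^2) = 64*t^2 + 16*t*x^2 + x^4 := by
                field_simp; ring
              nlinarith [e1, mul_pos ht0 ht0, mul_nonneg ht0.le (sq_nonneg x)]
          _ ≤ (Real.exp (x^2/(8*t)))^2 := by
              apply pow_le_pow_left₀ (by positivity)
              exact (Real.add_one_le_exp _).trans_eq' (by ring_nf)
          _ = Real.exp (x^2/(4*t)) := by
              rw [← Real.exp_nat_mul]; ring_nf
      have h4 : t ^ (-2:ℝ) = (t^2)⁻¹ := by
        rw [show (-2:ℝ) = -(2:ℕ) by norm_num, Real.rpow_neg ht0.le, Real.rpow_natCast]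
      rw [Real.norm_eq_abs, abs_of_nonneg
        (mul_nonneg (Real.rpow_nonneg ht0.le r) (Real.exp_pos _).le)]
      calc t ^ r * Real.exp (-t - x^2/(4*t)) ≤ t ^ (-2:ℝ) * (64 * t^2/x^4) :=
            mul_le_mul h1 (h2.trans h3) (Real.exp_pos _).le (Real.rpow_nonneg ht0.le _)
        _ = 64/x^4 := by rw [h4]; field_simp
  have hIoi : IntegrableOn (fun t : ℝ => t ^ r * Real.exp (-t - x^2/(4*t))) (Set.Ioi 1) := by
    have hexp : IntegrableOn (fun t : ℝ => Real.exp (-t)) (Set.Ioi 1) := by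
      have := exp_neg_integrableOn_Ioi 1 (one_pos)
      simpa using this
    apply Integrable.mono' hexp
    · exact (hcont.mono (fun t (ht : 1 < t) => lt_trans one_pos ht)).aestronglyMeasurable
        measurableSet_Ioi
    · filter_upwards [ae_restrict_mem measurableSet_Ioi] with t (ht : 1 < t)
      have ht0 : (0:ℝ) < t := lt_trans one_pos ht
      have h1 : t ^ r ≤ 1 := Real.rpow_le_one_of_one_le_of_nonpos ht.le hr2
      have h2 : Real.exp (-t - x^2/(4*t)) ≤ Real.exp (-t) := by
        apply Real.exp_le_exp.mpr
        have : 0 < x^2/(4*t) := by positivity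
        linarith
      rw [Real.norm_eq_abs, abs_of_nonneg
        (mul_nonneg (Real.rpow_nonneg ht0.le r) (Real.exp_pos _).le)]
      calc t ^ r * Real.exp (-t - x^2/(4*t)) ≤ 1 * Real.exp (-t) :=
            mul_le_mul h1 h2 (Real.exp_pos _).le zero_le_one
        _ = Real.exp (-t) := one_mul _
  have : Set.Ioi (0:ℝ) = Set.Ioc 0 1 ∪ Set.Ioi 1 := (Set.Ioc_union_Ioi_eq_Ioi zero_le_one).symm
  rw [this]
  exact hIoc.union hIoi


theorem my_sub (x : ℝ) (hx : 0 < x) (μ : ℝ) :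
    ∫ y in Set.Ioi (0:ℝ), y ^ μ * Real.exp (-y - x^2/(4*y))
      = ∫ t in Set.Ioi (0:ℝ), (x^2/4) ^ (μ+1) * (t ^ (-μ-2) * Real.exp (-t - x^2/(4*t))) := by
  have himg : (fun t : ℝ => x^2/(4*t)) '' Set.Ioi 0 = Set.Ioi 0 := by
    ext y
    constructor
    · rintro ⟨t, ht, rfl⟩
      have ht0 : (0:ℝ) < t := ht
      exact mem_Ioi.mpr (by positivity)
    · intro hy
      have hy0 : (0:ℝ) < y := hy
      exact ⟨x^2/(4*y), mem_Ioi.mpr (by positivity), by field_simp⟩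
  have hderiv : ∀ t ∈ Set.Ioi (0:ℝ),
      HasDerivWithinAt (fun t : ℝ => x^2/(4*t)) (-(x^2)/(4*t^2)) (Set.Ioi 0) t := by
    intro t ht
    have ht0 : (0:ℝ) < t := ht
    have : HasDerivAt (fun t : ℝ => x^2/(4*t)) (-(x^2)/(4*t^2)) t := by
      have h1 : HasDerivAt (fun t : ℝ => 4*t) 4 t := by
        simpa using (hasDerivAt_id t).const_mul 4
      have h2 := (h1.inv (by positivity)).const_mul (x^2)
      have hfun : (fun t : ℝ => x^2/(4*t)) = fun t : ℝ => x^2 * (4*t)⁻¹ := by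
        funext s; rw [div_eq_mul_inv]
      rw [hfun]
      refine h2.congr_deriv ?_
      ring
    exact this.hasDerivWithinAt
  have hinj : Set.InjOn (fun t : ℝ => x^2/(4*t)) (Set.Ioi 0) := by
    intro t1 h1 t2 h2 he
    have h10 : (0:ℝ) < t1 := h1
    have h20 : (0:ℝ) < t2 := h2
    field_simp at he
    nlinarith [sq_nonneg x, hx]
  have key := integral_image_eq_integral_abs_deriv_smul measurableSet_Ioi hderiv hinj
    (fun y => y ^ μ * Real.exp (-y - x^2/(4*y)))
  rw [himg] at key
  rw [key]
  apply setIntegral_congr_fun measurableSet_Ioi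
  intro t ht
  have ht0 : (0:ℝ) < t := ht
  have habs : |(-(x^2)/(4*t^2))| = x^2/4 * (t^2)⁻¹ := by
    rw [abs_div, abs_neg, abs_of_nonneg (by positivity : (0:ℝ) ≤ x^2),
      abs_of_nonneg (by positivity : (0:ℝ) ≤ 4*t^2)]
    field_simp
  have hEarg : -(x^2/(4*t)) - x^2/(4*(x^2/(4*t))) = -t - x^2/(4*t) := by
    field_simp; ring
  have hpow : (x^2/(4*t)) ^ μ = (x^2/4) ^ μ * t ^ (-μ) := by
    rw [show x^2/(4*t) = (x^2/4)/t by ring, Real.div_rpow (by positivity) ht0.le,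
      Real.rpow_neg ht0.le, div_eq_mul_inv]
  simp only [smul_eq_mul]
  rw [habs, hEarg, hpow]
  have ht2 : (t^2)⁻¹ = t ^ (-2:ℝ) := by
    rw [show (-2:ℝ) = -(2:ℕ) by norm_num, Real.rpow_neg ht0.le, Real.rpow_natCast]
  rw [ht2, Real.rpow_neg ht0.le μ]
  rw [show (x^2/4) ^ (μ+1) = (x^2/4) ^ μ * (x^2/4) by
    rw [Real.rpow_add (by positivity), Real.rpow_one]]
  have hsplit : t ^ (-μ-2) = (t ^ μ)⁻¹ * t ^ (-2:ℝ) := by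
    rw [← Real.rpow_neg ht0.le μ, ← Real.rpow_add ht0]
    ring_nf
  rw [hsplit]
  ring


theorem gauss_sub (x : ℝ) (hx : 0 < x) :
    ∫ t in Set.Ioi (0:ℝ), (t + x/2)/(2 * t * Real.sqrt t) *
        Real.exp (-(Real.sqrt t - x/(2*Real.sqrt t))^2)
      = Real.sqrt Real.pi := by
  set φ : ℝ → ℝ := fun t => Real.sqrt t - x/(2*Real.sqrt t) with hφdef
  set φ' : ℝ → ℝ := fun t => (t + x/2)/(2 * t * Real.sqrt t) with hφ'def
  have hderiv : ∀ t ∈ Set.Ioi (0:ℝ), HasDerivWithinAt φ (φ' t) (Set.Ioi 0) t := by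
    intro t ht
    have ht0 : (0:ℝ) < t := ht
    have hst : (0:ℝ) < Real.sqrt t := Real.sqrt_pos.mpr ht0
    have h1 : HasDerivAt Real.sqrt (1/(2*Real.sqrt t)) t := Real.hasDerivAt_sqrt (ne_of_gt ht0)
    have h2 : HasDerivAt (fun s : ℝ => x/2 * (Real.sqrt s)⁻¹)
        (x/2 * (-(1/(2*Real.sqrt t))/(Real.sqrt t)^2)) t := (h1.inv (ne_of_gt hst)).const_mul (x/2)
    have hfun : φ = fun s : ℝ => Real.sqrt s - x/2 * (Real.sqrt s)⁻¹ := by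
      funext s; rw [hφdef]; ring
    rw [hfun]
    have h3 := h1.sub h2
    have : 1/(2*Real.sqrt t) - x/2 * (-(1/(2*Real.sqrt t))/(Real.sqrt t)^2) = φ' t := by
      rw [hφ'def]
      have hsq : (Real.sqrt t)^2 = t := Real.sq_sqrt ht0.le
      field_simp
      nlinarith [hsq]
    rw [this] at h3
    exact h3.hasDerivWithinAt
  have hmono : StrictMonoOn φ (Set.Ioi 0) := by
    intro t1 h1 t2 h2 hlt
    have h10 : (0:ℝ) < t1 := h1
    have h20 : (0:ℝ) < t2 := h2
    have hs : Real.sqrt t1 < Real.sqrt t2 := Real.sqrt_lt_sqrt h10.le hlt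
    have hs1 : (0:ℝ) < Real.sqrt t1 := Real.sqrt_pos.mpr h10
    have hd : x/(2*Real.sqrt t2) ≤ x/(2*Real.sqrt t1) := by
      apply div_le_div_of_nonneg_left hx.le (by positivity)
      linarith
    simp only [hφdef]
    linarith
  have himg : φ '' Set.Ioi 0 = Set.univ := by
    apply Set.eq_univ_of_forall
    intro v
    have hpos : (0:ℝ) < v^2 + 2*x := by positivity
    set s := Real.sqrt (v^2 + 2*x) with hsdef
    have hs2 : s^2 = v^2 + 2*x := Real.sq_sqrt hpos.le
    have hsnn : 0 ≤ s := Real.sqrt_nonneg _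
    have hvs : -v < s := by nlinarith
    set w : ℝ := (v + s)/2 with hwdef
    have hw : 0 < w := by rw [hwdef]; linarith
    refine ⟨w^2, mem_Ioi.mpr (by positivity), ?_⟩
    have hsw : Real.sqrt (w^2) = w := Real.sqrt_sq hw.le
    simp only [hφdef, hsw]
    have hkey : 2*w^2 - 2*v*w - x = 0 := by rw [hwdef]; nlinarith [hs2]
    field_simp
    nlinarith [hkey]
  have key := integral_image_eq_integral_abs_deriv_smul measurableSet_Ioi hderiv
    (hmono.injOn) (fun v => Real.exp (-v^2))
  rw [himg] at key
  have hl : ∫ v in Set.univ, Real.exp (-v^2) = Real.sqrt Real.pi := by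
    rw [MeasureTheory.setIntegral_univ]
    have := integral_gaussian 1
    simpa using this
  rw [hl] at key
  rw [key]
  apply setIntegral_congr_fun measurableSet_Ioi
  intro t ht
  have ht0 : (0:ℝ) < t := ht
  have hst : (0:ℝ) < Real.sqrt t := Real.sqrt_pos.mpr ht0
  have hφ'pos : 0 < φ' t := by rw [hφ'def]; positivity
  simp only [smul_eq_mul, abs_of_pos hφ'pos]
  rfl


theorem gamma_aux (a : ℝ) (ha : 0 < a) (ha2 : a ≤ 1/2) : a * Real.Gamma a ≤ 1 := by
  have h1 : Real.Gamma (a + 1) ≤ 1 := by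
    have hc := Real.convexOn_log_Gamma
    have key := hc.2 (mem_Ioi.mpr one_pos) (mem_Ioi.mpr two_pos)
      (by linarith : (0:ℝ) ≤ 1 - a) (le_of_lt ha) (by ring)
    simp only [smul_eq_mul, Function.comp] at key
    rw [Real.Gamma_one, Real.Gamma_two, Real.log_one] at key
    have h2 : (1 - a) * 1 + a * 2 = a + 1 := by ring
    rw [h2] at key
    simp at key
    calc Real.Gamma (a+1) = Real.exp (Real.log (Real.Gamma (a+1))) := by
          rw [Real.exp_log (Real.Gamma_pos_of_pos (by linarith))]
      _ ≤ Real.exp 0 := Real.exp_le_exp.mpr key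
      _ = 1 := Real.exp_zero
  rw [Real.Gamma_add_one (ne_of_gt ha)] at h1
  linarith

theorem besselK_lb (ν x : ℝ) (hν : 1/2 ≤ ν) (hν1 : ν ≤ 1) (hx : 0 < x) :
    Real.sqrt Real.pi / Real.sqrt (2*x) * Real.exp (-x) ≤ besselK ν x := by
  have hc : (0:ℝ) < x/2 := by linarith
  have hInt : ∀ r : ℝ, -2 ≤ r → r ≤ 0 →
      IntegrableOn (fun t : ℝ => t ^ r * Real.exp (-t - x^2/(4*t))) (Set.Ioi 0) :=
    fun r h1 h2 => my_integrable x hx r h1 h2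
  have h1 : 2 * besselK ν x
      = (x/2)^ν * ∫ t in Set.Ioi (0:ℝ), t ^ (-ν-1) * Real.exp (-t - x^2/(4*t)) := by
    rw [besselK]; ring
  have hsub := my_sub x hx (-ν-1)
  rw [show -ν-1+1 = -ν by ring, show -(-ν-1)-2 = ν-1 by ring] at hsub
  have hpow2 : (x^2/4 : ℝ) ^ (-ν) = (x/2) ^ ((2:ℝ) * -ν) := by
    rw [show x^2/4 = (x/2)^2 by ring, ← Real.rpow_natCast (x/2) 2, ← Real.rpow_mul hc.le]
    norm_num
  have h2 : 2 * besselK ν x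
      = (x/2)^(-ν) * ∫ t in Set.Ioi (0:ℝ), t ^ (ν-1) * Real.exp (-t - x^2/(4*t)) := by
    rw [h1, hsub, MeasureTheory.integral_const_mul, hpow2, ← mul_assoc,
      ← Real.rpow_add hc, show ν + 2 * -ν = -ν by ring]
  have int1 : IntegrableOn
      (fun t : ℝ => (x/2)^ν * (t ^ (-ν-1) * Real.exp (-t - x^2/(4*t)))) (Set.Ioi 0) :=
    (hInt (-ν-1) (by linarith) (by linarith)).const_mul _
  have int2 : IntegrableOn
      (fun t : ℝ => (x/2)^(-ν) * (t ^ (ν-1) * Real.exp (-t - x^2/(4*t)))) (Set.Ioi 0) :=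
    (hInt (ν-1) (by linarith) (by linarith)).const_mul _
  have int3 : IntegrableOn
      (fun t : ℝ => (x/2)^(1/2:ℝ) * (t ^ (-(3/2):ℝ) * Real.exp (-t - x^2/(4*t)))) (Set.Ioi 0) :=
    (hInt (-(3/2)) (by norm_num) (by norm_num)).const_mul _
  have int4 : IntegrableOn
      (fun t : ℝ => (x/2)^(-(1/2):ℝ) * (t ^ (-(1/2):ℝ) * Real.exp (-t - x^2/(4*t)))) (Set.Ioi 0) :=
    (hInt (-(1/2)) (by norm_num) (by norm_num)).const_mul _
  have h3 : 4 * besselK ν x = ∫ t in Set.Ioi (0:ℝ),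
      ((x/2)^ν * (t ^ (-ν-1) * Real.exp (-t - x^2/(4*t)))
        + (x/2)^(-ν) * (t ^ (ν-1) * Real.exp (-t - x^2/(4*t)))) := by
    rw [MeasureTheory.integral_add int1 int2, MeasureTheory.integral_const_mul,
      MeasureTheory.integral_const_mul, ← h1, ← h2]
    ring
  have h4 : ∀ t ∈ Set.Ioi (0:ℝ),
      (x/2)^(1/2:ℝ) * (t ^ (-(3/2):ℝ) * Real.exp (-t - x^2/(4*t)))
        + (x/2)^(-(1/2):ℝ) * (t ^ (-(1/2):ℝ) * Real.exp (-t - x^2/(4*t)))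
      ≤ (x/2)^ν * (t ^ (-ν-1) * Real.exp (-t - x^2/(4*t)))
        + (x/2)^(-ν) * (t ^ (ν-1) * Real.exp (-t - x^2/(4*t))) := by
    intro t ht
    have ht0 : (0:ℝ) < t := ht
    have hb := rpow_mono_aux2 (x/2) t ν hc ht0 hν
    have hE : (0:ℝ) < Real.exp (-t - x^2/(4*t)) := Real.exp_pos _
    nlinarith [mul_le_mul_of_nonneg_right hb hE.le]
  have h5 := MeasureTheory.setIntegral_mono_on (int3.add int4) (int1.add int2)
    measurableSet_Ioi h4
  simp only [Pi.add_apply] at h5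
  have h6 : ∫ t in Set.Ioi (0:ℝ),
      ((x/2)^(1/2:ℝ) * (t ^ (-(3/2):ℝ) * Real.exp (-t - x^2/(4*t)))
        + (x/2)^(-(1/2):ℝ) * (t ^ (-(1/2):ℝ) * Real.exp (-t - x^2/(4*t))))
      = 2 * (x/2)^(-(1/2):ℝ) * Real.exp (-x) * Real.sqrt Real.pi := by
    have hcong : ∀ t ∈ Set.Ioi (0:ℝ),
        (x/2)^(1/2:ℝ) * (t ^ (-(3/2):ℝ) * Real.exp (-t - x^2/(4*t)))
          + (x/2)^(-(1/2):ℝ) * (t ^ (-(1/2):ℝ) * Real.exp (-t - x^2/(4*t)))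
        = (2 * (x/2)^(-(1/2):ℝ) * Real.exp (-x)) *
          ((t + x/2)/(2 * t * Real.sqrt t) *
            Real.exp (-(Real.sqrt t - x/(2*Real.sqrt t))^2)) := by
      intro t ht
      have ht0 : (0:ℝ) < t := ht
      have hst : (0:ℝ) < Real.sqrt t := Real.sqrt_pos.mpr ht0
      have hsq : (Real.sqrt t)^2 = t := Real.sq_sqrt ht0.le
      have hexpand : (Real.sqrt t - x/(2*Real.sqrt t))^2 = t - x + x^2/(4*t) := by
        have h := hsq
        field_simp
        linear_combination (16*t*Real.sqrt t^2 - 4*x^2) * h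
      have hEfact : Real.exp (-t - x^2/(4*t))
          = Real.exp (-x) * Real.exp (-(Real.sqrt t - x/(2*Real.sqrt t))^2) := by
        rw [← Real.exp_add, hexpand]
        congr 1
        ring
      have h32 : t ^ (-(3/2):ℝ) = (t * Real.sqrt t)⁻¹ := by
        rw [show (-(3/2):ℝ) = -(1 + 1/2) by norm_num, Real.rpow_neg ht0.le,
          Real.rpow_add ht0, Real.rpow_one, ← Real.sqrt_eq_rpow]
      have h12 : t ^ (-(1/2):ℝ) = (Real.sqrt t)⁻¹ := by
        rw [Real.rpow_neg ht0.le, ← Real.sqrt_eq_rpow]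
      have hph : (x/2:ℝ)^(1/2:ℝ) = (x/2) * (x/2)^(-(1/2):ℝ) := by
        rw [← Real.rpow_one_add' (by positivity) (by norm_num)]
        norm_num
      rw [hEfact, h32, h12, hph]
      field_simp
      ring
    rw [MeasureTheory.setIntegral_congr_fun measurableSet_Ioi hcong,
      MeasureTheory.integral_const_mul, gauss_sub x hx]
  rw [h6] at h5
  rw [← h3] at h5
  have hs2 : Real.sqrt (2*x) = 2 * Real.sqrt (x/2) := by
    rw [show 2*x = 2^2*(x/2) by ring, Real.sqrt_mul (by positivity) (x/2),
      Real.sqrt_sq (by norm_num : (0:ℝ) ≤ 2)]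
  have hsp : (0:ℝ) < Real.sqrt (x/2) := Real.sqrt_pos.mpr hc
  have hxh : (x/2:ℝ)^(-(1/2):ℝ) = (Real.sqrt (x/2))⁻¹ := by
    rw [Real.rpow_neg hc.le, ← Real.sqrt_eq_rpow]
  have heq : Real.sqrt Real.pi / Real.sqrt (2*x) * Real.exp (-x)
      = (2 * (x/2)^(-(1/2):ℝ) * Real.exp (-x) * Real.sqrt Real.pi) / 4 := by
    rw [hs2, hxh]
    field_simp
    ring
  rw [heq]
  linarith


/-- For `0 < a ≤ 1/2` and `β ≠ 0`,
`f_d(β) ≥ √π a |β|^{(2a-3)/4} exp(-√(2|β|)) / 2^{(2a+5)/4}`. -/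
theorem dlDensity_lower_bound (a β : ℝ) (ha : 0 < a) (ha2 : a ≤ 1 / 2) (hβ : β ≠ 0) :
    Real.sqrt Real.pi * a * |β| ^ ((2 * a - 3) / 4) * Real.exp (-Real.sqrt (2 * |β|))
        / (2 : ℝ) ^ ((2 * a + 5) / 4)
      ≤ dlDensity a β := by
  have hb : (0:ℝ) < |β| := abs_pos.mpr hβ
  set b := |β| with hbdef
  have hx : (0:ℝ) < Real.sqrt (2*b) := Real.sqrt_pos.mpr (by positivity)
  set x := Real.sqrt (2*b) with hxdef
  have hK := besselK_lb (1-a) x (by linarith) (by linarith) hx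
  have hGpos : 0 < Real.Gamma a := Real.Gamma_pos_of_pos ha
  have hL : (0:ℝ) ≤ Real.sqrt Real.pi / Real.sqrt (2*x) * Real.exp (-x) := by positivity
  have h2p : (0:ℝ) < (2:ℝ) ^ ((1+a)/2) := Real.rpow_pos_of_pos two_pos _
  have hCpos : (0:ℝ) < (1 / ((2:ℝ) ^ ((1 + a) / 2) * Real.Gamma a)) * b ^ ((a - 1) / 2) := by
    positivity
  have step1 : (1 / ((2:ℝ) ^ ((1 + a) / 2) * Real.Gamma a)) * b ^ ((a - 1) / 2) *
      (Real.sqrt Real.pi / Real.sqrt (2*x) * Real.exp (-x)) ≤ dlDensity a β := by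
    rw [dlDensity]
    exact mul_le_mul_of_nonneg_left hK hCpos.le
  -- lower bound the constant using Gamma a ≤ 1/a
  have hGinv : a ≤ 1 / Real.Gamma a := by
    rw [le_div_iff₀ hGpos]
    exact gamma_aux a ha ha2
  have step2 : a * ((2:ℝ) ^ ((1+a)/2))⁻¹ * b ^ ((a - 1) / 2) *
        (Real.sqrt Real.pi / Real.sqrt (2*x) * Real.exp (-x))
      ≤ (1 / ((2:ℝ) ^ ((1 + a) / 2) * Real.Gamma a)) * b ^ ((a - 1) / 2) *
        (Real.sqrt Real.pi / Real.sqrt (2*x) * Real.exp (-x)) := by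
    apply mul_le_mul_of_nonneg_right _ hL
    apply mul_le_mul_of_nonneg_right _ (Real.rpow_nonneg hb.le _)
    rw [one_div, mul_inv]
    rw [mul_comm a _]
    apply mul_le_mul_of_nonneg_left _ (inv_pos.mpr h2p).le
    rw [← one_div]
    exact hGinv
  -- exact value of the constant
  have hsqrt2x : Real.sqrt (2*x) = (2:ℝ)^((3:ℝ)/4) * b^((1:ℝ)/4) := by
    rw [hxdef, Real.sqrt_eq_rpow, Real.sqrt_eq_rpow,
      Real.mul_rpow (by norm_num) hb.le]
    rw [show (2:ℝ) * ((2:ℝ)^(1/2:ℝ) * b^(1/2:ℝ)) = ((2:ℝ)^((3:ℝ)/2)) * b^(1/2:ℝ) by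
      rw [show (3:ℝ)/2 = 1 + 1/2 by norm_num, Real.rpow_add two_pos, Real.rpow_one]; ring]
    rw [Real.mul_rpow (by positivity) (by positivity),
      ← Real.rpow_mul (by norm_num : (0:ℝ) ≤ 2), ← Real.rpow_mul hb.le]
    norm_num
  have hconst : Real.sqrt Real.pi * a * b ^ ((2 * a - 3) / 4) * Real.exp (-x)
        / (2 : ℝ) ^ ((2 * a + 5) / 4)
      = a * ((2:ℝ) ^ ((1+a)/2))⁻¹ * b ^ ((a - 1) / 2) *
        (Real.sqrt Real.pi / Real.sqrt (2*x) * Real.exp (-x)) := by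
    rw [hsqrt2x]
    rw [show ((2:ℝ) ^ ((2*a+5)/4)) = (2:ℝ)^((1+a)/2) * 2^((3:ℝ)/4) by
      rw [← Real.rpow_add two_pos]; ring_nf]
    rw [show b ^ ((2*a-3)/4) = b ^ ((a-1)/2) * (b^((1:ℝ)/4))⁻¹ by
      rw [← Real.rpow_neg hb.le, ← Real.rpow_add hb]; ring_nf]
    have hb14 : (0:ℝ) < b^((1:ℝ)/4) := Real.rpow_pos_of_pos hb _
    have h234 : (0:ℝ) < (2:ℝ)^((3:ℝ)/4) := Real.rpow_pos_of_pos two_pos _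
    field_simp
  rw [hconst]
  exact step2.trans step1
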